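/- Let (N_1,…,N_K) be distributed as Multinomial(n, p*(1), …, p*(K)) for p* ∈ Δ^K, and for each i let Ñ_i be independent random variables with Ñ_i ~ Binomial(n, min{1, 3·p*(i)}). Let R ⊆ [K] satisfy ∑_{i ∉ R} p*(i) ≥ 1/3. Then for any real thresholds b_1,…,b_K ≥ 0 and any z > 0, P( ∑_{i ∈ R} 1[N_i ≥ b_i] ≥ z ) ≤ P( ∑_{i ∈ R} 1[Ñ_i ≥ b_i] ≥ z ). -/

import Mathlib

open scoped ENNReal
open MeasureTheory

/-- The probability simplex on `Fin K`. -/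
def simplex (K : ℕ) : Set (Fin K → ℝ) :=
  {p | (∀ i, 0 ≤ p i) ∧ ∑ i, p i = 1}

/-- Kullback–Leibler divergence between two vectors on `Fin K`, with the
conventions `0 · log 0 = 0` and value `∞` if `p i > 0 = q i` for some `i`. -/
noncomputable def klD {K : ℕ} (p q : Fin K → ℝ) : ℝ≥0∞ :=
  if ∀ i, 0 < p i → 0 < q i then ENNReal.ofReal (∑ i, p i * Real.log (p i / q i)) else ⊤

/-- The law of `n` i.i.d. samples from the distribution `p` on `Fin K`. -/
noncomputable def iidMeasure (n K : ℕ) (p : Fin K → ℝ) : Measure (Fin n → Fin K) :=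
  ∑ x : Fin n → Fin K, (∏ t, ENNReal.ofReal (p (x t))) • Measure.dirac x

/-- `countTo x t i` is the number of indices `s` among the first `t` samples with `x s = i`. -/
def countTo {n K : ℕ} (x : Fin n → Fin K) (t : ℕ) (i : Fin K) : ℕ :=
  (Finset.univ.filter (fun s : Fin n => (s : ℕ) < t ∧ x s = i)).card

/-- The multinomial distribution: the joint law of the category counts of `n` i.i.d.
draws from `p` on `Fin K`. -/
noncomputable def multinomialM (n K : ℕ) (p : Fin K → ℝ) : Measure (Fin K → ℕ) :=
  Measure.map (fun x i => countTo x n i) (iidMeasure n K p)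

/-- The joint law of `K` independent binomial random variables, the `i`-th having
`n` trials and success probability `q i`. -/
noncomputable def binPi (n K : ℕ) (q : Fin K → ℝ) : Measure (Fin K → ℕ) :=
  ∑ c : Fin K → Fin (n + 1),
    (∏ i, ENNReal.ofReal ((n.choose (c i)) * q i ^ (c i : ℕ) * (1 - q i) ^ (n - (c i : ℕ)))) •
      Measure.dirac (fun i => ((c i : ℕ)))

open Finset

namespace MTB
variable {K : ℕ}

noncomputable def binw (n : ℕ) (q : ℝ) (k : ℕ) : ℝ := n.choose k * q^k * (1-q)^(n-k)

lemma binw_nonneg {q : ℝ} (h0 : 0 ≤ q) (h1 : q ≤ 1) (n k : ℕ) : 0 ≤ binw n q k := by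
  have : (0:ℝ) ≤ 1 - q := by linarith
  unfold binw; positivity

lemma binw_pascal (n : ℕ) (q : ℝ) (k : ℕ) :
    binw (n+1) q k = q * (if k = 0 then 0 else binw n q (k-1)) + (1-q) * binw n q k := by
  rcases k with _ | k'
  · simp [binw, pow_succ]; ring
  · simp only [Nat.succ_ne_zero, if_false]
    rcases lt_trichotomy k' n with h | h | h
    · have h1 : n - k' = (n - (k'+1)) + 1 := by omega
      have h2 : n + 1 - (k'+1) = n - k' := by omega
      simp only [binw, Nat.add_sub_cancel, Nat.choose_succ_succ' , h2]
      push_cast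
      rw [h1]
      ring
    · subst h
      have h2 : k' + 1 - (k'+1) = 0 := by omega
      simp [binw, Nat.choose_succ_self, Nat.choose_self, pow_succ]
      ring
    · have c1 : n.choose (k'+1) = 0 := Nat.choose_eq_zero_of_lt (by omega)
      have c2 : n.choose k' = 0 := Nat.choose_eq_zero_of_lt (by omega)
      have c3 : (n+1).choose (k'+1) = 0 := Nat.choose_eq_zero_of_lt (by omega)
      simp [binw, c1, c2, c3]
end MTB

namespace MTB
open Classical in
noncomputable def ej (j : Fin K) : Fin K → ℕ := fun i => if i = j then 1 else 0
open Classical in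
noncomputable def indF (T : Finset (Fin K)) : Fin K → ℕ := fun i => if i ∈ T then 1 else 0

noncomputable def Emult (n : ℕ) (p : Fin K → ℝ) (f : (Fin K → ℕ) → ℝ) : ℝ :=
  ∑ x : Fin n → Fin K, (∏ t, p (x t)) * f (countTo x n)

noncomputable def Ebin (n : ℕ) (q : Fin K → ℝ) (f : (Fin K → ℕ) → ℝ) : ℝ :=
  ∑ d ∈ Fintype.piFinset (fun _ : Fin K => Finset.range (n+1)),
    (∏ i, binw n (q i) (d i)) * f d

lemma countTo_eq_sum {n : ℕ} (x : Fin n → Fin K) (i : Fin K) :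
    countTo x n i = ∑ s : Fin n, if x s = i then 1 else 0 := by
  unfold countTo
  rw [Finset.card_filter]
  refine Finset.sum_congr rfl fun s _ => ?_
  simp [s.isLt]

lemma countTo_cons {n : ℕ} (j : Fin K) (y : Fin n → Fin K) :
    countTo (Fin.cons j y) (n+1) = countTo y n + ej j := by
  funext i
  simp only [Pi.add_apply, countTo_eq_sum, ej]
  rw [Fin.sum_univ_succ]
  simp only [Fin.cons_zero, Fin.cons_succ]
  rw [add_comm]
  congr 1
  by_cases h : j = i <;> simp [h, eq_comm]

lemma Emult_succ (n : ℕ) (p : Fin K → ℝ) (f : (Fin K → ℕ) → ℝ) :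
    Emult (n+1) p f = ∑ j, p j * Emult n p (fun c => f (c + ej j)) := by
  unfold Emult
  rw [Fintype.sum_equiv ((Fin.consEquiv (fun _ : Fin (n+1) => Fin K)).symm)
    (fun x => (∏ t, p (x t)) * f (countTo x (n+1)))
    (fun jy => (∏ t, p ((Fin.cons jy.1 jy.2 : Fin (n+1) → Fin K) t)) *
      f (countTo (Fin.cons jy.1 jy.2 : Fin (n+1) → Fin K) (n+1)))
    (fun x => by
      have he : (Fin.consEquiv (fun _ : Fin (n+1) => Fin K)).symm x
          = (x 0, fun i => x i.succ) := rfl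
      rw [he]
      have hx : (Fin.cons (x 0) (fun i : Fin n => x i.succ) : Fin (n+1) → Fin K) = x :=
        Fin.cons_self_tail x
      simp only [hx])]
  rw [Fintype.sum_prod_type]
  refine Finset.sum_congr rfl fun j _ => ?_
  rw [Finset.mul_sum]
  refine Finset.sum_congr rfl fun y _ => ?_
  show (∏ t, p ((Fin.cons j y : Fin (n+1) → Fin K) t)) *
      f (countTo (Fin.cons j y : Fin (n+1) → Fin K) (n+1)) = _
  rw [countTo_cons]
  rw [Fin.prod_univ_succ]
  simp only [Fin.cons_zero, Fin.cons_succ]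
  ring
end MTB

namespace MTB

lemma binw_of_gt {n k : ℕ} (q : ℝ) (h : n < k) : binw n q k = 0 := by
  simp [binw, Nat.choose_eq_zero_of_lt h]

open Classical in
lemma Ebin_succ (n : ℕ) (q : Fin K → ℝ) (f : (Fin K → ℕ) → ℝ) :
    Ebin (n+1) q f = ∑ T ∈ (Finset.univ : Finset (Fin K)).powerset,
      ((∏ i ∈ T, q i) * ∏ i ∈ Finset.univ \ T, (1 - q i)) *
        Ebin n q (fun c => f (c + indF T)) := by
  classical
  set g : Fin K → (Fin K → ℕ) → ℝ :=
    fun i d => if d i = 0 then 0 else binw n (q i) (d i - 1) with hg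
  set bb : Fin K → (Fin K → ℕ) → ℝ := fun i d => binw n (q i) (d i) with hbb
  have key : ∀ d : Fin K → ℕ, (∏ i, binw (n+1) (q i) (d i)) =
      ∑ T ∈ (Finset.univ : Finset (Fin K)).powerset,
        (∏ i ∈ T, q i * g i d) * ∏ i ∈ Finset.univ \ T, (1 - q i) * bb i d := by
    intro d
    rw [← Finset.prod_add]
    exact Finset.prod_congr rfl fun i _ => binw_pascal n (q i) (d i)
  unfold Ebin
  simp only [key, Finset.sum_mul, Finset.mul_sum]
  rw [Finset.sum_comm]
  refine Finset.sum_congr rfl fun T hT => ?_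
  -- pull out the constants q i and (1 - q i)
  have hpull : ∀ d : Fin K → ℕ,
      (∏ i ∈ T, q i * g i d) * (∏ i ∈ Finset.univ \ T, (1 - q i) * bb i d) * f d
      = ((∏ i ∈ T, q i) * ∏ i ∈ Finset.univ \ T, (1 - q i)) *
          ((∏ i ∈ T, g i d) * (∏ i ∈ Finset.univ \ T, bb i d) * f d) := by
    intro d
    rw [Finset.prod_mul_distrib, Finset.prod_mul_distrib]
    ring
  simp only [hpull, ← Finset.mul_sum]
  congr 1
  -- now reindex d = c + indF T
  set φ : (Fin K → ℕ) → (Fin K → ℕ) := fun c => c + indF T with hφ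
  set C := Fintype.piFinset (fun _ : Fin K => Finset.range (n+1)) with hC
  set D := Fintype.piFinset (fun _ : Fin K => Finset.range (n+2)) with hD
  set F : (Fin K → ℕ) → ℝ :=
    fun d => (∏ i ∈ T, g i d) * (∏ i ∈ Finset.univ \ T, bb i d) * f d with hF
  have hinj : Set.InjOn φ C := by
    intro a _ c _ h
    funext i
    have := congrFun h i
    simpa [hφ, indF] using this
  have himg : C.image φ ⊆ D := by
    intro d hd
    rcases Finset.mem_image.mp hd with ⟨c, hc, rfl⟩
    rw [hD, Fintype.mem_piFinset]
    intro i
    have := (Fintype.mem_piFinset.mp hc) i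
    simp only [Finset.mem_range] at this ⊢
    simp only [hφ, Pi.add_apply, indF]
    split <;> omega
  have hzero : ∀ d ∈ D, d ∉ C.image φ → F d = 0 := by
    intro d hd hnd
    by_cases h1 : ∃ i ∈ T, d i = 0
    · rcases h1 with ⟨i, hiT, hi0⟩
      have : g i d = 0 := by simp [hg, hi0]
      rw [hF]; dsimp only
      rw [Finset.prod_eq_zero hiT this]
      ring
    · push_neg at h1
      by_cases h2 : ∃ i ∈ Finset.univ \ T, d i = n + 1
      · rcases h2 with ⟨i, hiT, hi⟩
        have : bb i d = 0 := by
          rw [hbb]; simp only [hi]; exact binw_of_gt _ (Nat.lt_succ_self n)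
        rw [hF]; dsimp only
        rw [Finset.prod_eq_zero hiT this]
        ring
      · exfalso
        push_neg at h2
        apply hnd
        refine Finset.mem_image.mpr ⟨fun i => d i - indF T i, ?_, ?_⟩
        · rw [hC, Fintype.mem_piFinset]
          intro i
          have hdi := (Fintype.mem_piFinset.mp hd) i
          simp only [Finset.mem_range] at hdi ⊢
          by_cases hiT : i ∈ T
          · have := h1 i hiT
            simp [indF, hiT]; omega
          · have := h2 i (by simp [hiT])
            simp [indF, hiT]; omega
        · funext i
          simp only [hφ, Pi.add_apply, indF]
          by_cases hiT : i ∈ T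
          · have := h1 i hiT
            simp [hiT]; omega
          · simp [hiT]
  rw [Finset.sum_subset himg hzero |>.symm.trans (Finset.sum_image (fun a ha c hc h => hinj ha hc h))]
  refine Finset.sum_congr rfl fun c hc => ?_
  rw [hF]; dsimp only
  have hval : ∀ i, (φ c) i = c i + indF T i := fun i => rfl
  have h1 : (∏ i ∈ T, g i (φ c)) = ∏ i ∈ T, binw n (q i) (c i) := by
    refine Finset.prod_congr rfl fun i hi => ?_
    simp [hg, hφ, indF, hi]
  have h2 : (∏ i ∈ Finset.univ \ T, bb i (φ c)) = ∏ i ∈ Finset.univ \ T, binw n (q i) (c i) := by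
    refine Finset.prod_congr rfl fun i hi => ?_
    have : i ∉ T := (Finset.mem_sdiff.mp hi).2
    simp [hbb, hφ, indF, this]
  rw [h1, h2]
  rw [mul_comm (∏ i ∈ T, binw n (q i) (c i)) (∏ i ∈ Finset.univ \ T, binw n (q i) (c i)),
    Finset.prod_sdiff (Finset.subset_univ T)]

end MTB

namespace MTB
open Classical

lemma indF_empty : indF (∅ : Finset (Fin K)) = 0 := by
  funext i; simp [indF]

lemma indF_insert {T : Finset (Fin K)} {i : Fin K} (h : i ∉ T) :
    indF (insert i T) = indF T + ej i := by
  classical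
  funext j
  simp only [indF, Pi.add_apply, ej, Finset.mem_insert]
  by_cases hj : j = i
  · subst hj; simp [h]
  · simp [hj]

lemma sdiff_insert_insert {A T : Finset (Fin K)} {i : Fin K} (hiA : i ∉ A) (hT : T ⊆ A) :
    (insert i A) \ (insert i T) = A \ T := by
  classical
  ext x
  simp only [Finset.mem_sdiff, Finset.mem_insert]
  constructor
  · rintro ⟨hx | hx, hx2⟩
    · exact (hx2 (Or.inl hx)).elim
    · exact ⟨hx, fun hxT => hx2 (Or.inr hxT)⟩
  · rintro ⟨hx, hx2⟩
    exact ⟨Or.inr hx, by rintro (rfl | hxT); exacts [hiA hx, hx2 hxT]⟩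

lemma sdiff_insert_left {A T : Finset (Fin K)} {i : Fin K} (hiA : i ∉ A) (hT : T ⊆ A) :
    (insert i A) \ T = insert i (A \ T) := by
  classical
  ext x
  simp only [Finset.mem_sdiff, Finset.mem_insert]
  constructor
  · rintro ⟨hx | hx, hx2⟩
    · exact Or.inl hx
    · exact Or.inr ⟨hx, hx2⟩
  · rintro (rfl | ⟨hx, hx2⟩)
    · exact ⟨Or.inl rfl, fun hxT => hiA (hT hxT)⟩
    · exact ⟨Or.inr hx, hx2⟩

/-- Bernoulli layer lemma. -/
lemma BL (q p : Fin K → ℝ) (hq0 : ∀ i, 0 ≤ q i) (hq1 : ∀ i, q i ≤ 1) (hp : ∀ i, 0 ≤ p i) :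
    ∀ (A : Finset (Fin K)) (G : (Fin K → ℕ) → ℝ), Monotone G → (∀ v, 0 ≤ G v) →
    (0 ≤ 1 - ∑ i ∈ A, p i) →
    (∀ i ∈ A, p i ≤ ((1 - ∑ j ∈ A, p j) + p i) * q i) →
    (∑ i ∈ A, p i * G (ej i)) + (1 - ∑ i ∈ A, p i) * G 0 ≤
      ∑ T ∈ A.powerset, ((∏ i ∈ T, q i) * ∏ i ∈ A \ T, (1 - q i)) * G (indF T) := by
  classical
  intro A
  induction A using Finset.induction_on with
  | empty =>
    intro G _ _ _ _
    simp [indF_empty]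
  | @insert i A' hiA' IH =>
    intro G hGm hG0 hs0 hkey
    have hpos : ∀ v w : Fin K → ℕ, v ≤ w → G v ≤ G w := fun v w h => hGm h
    have hsum : ∑ j ∈ insert i A', p j = p i + ∑ j ∈ A', p j := Finset.sum_insert hiA'
    rw [Finset.sum_powerset_insert hiA']
    have hW1 : ∀ T ∈ A'.powerset,
        ((∏ j ∈ T, q j) * ∏ j ∈ (insert i A') \ T, (1 - q j)) * G (indF T)
        = (1 - q i) * (((∏ j ∈ T, q j) * ∏ j ∈ A' \ T, (1 - q j)) * G (indF T)) := by
      intro T hT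
      have hT' : T ⊆ A' := Finset.mem_powerset.mp hT
      have hiT : i ∉ A' \ T := fun h => hiA' (Finset.mem_sdiff.mp h).1
      rw [sdiff_insert_left hiA' hT', Finset.prod_insert hiT]
      ring
    have hW2 : ∀ T ∈ A'.powerset,
        ((∏ j ∈ insert i T, q j) * ∏ j ∈ (insert i A') \ (insert i T), (1 - q j)) *
          G (indF (insert i T))
        = q i * (((∏ j ∈ T, q j) * ∏ j ∈ A' \ T, (1 - q j)) * G (indF T + ej i)) := by
      intro T hT
      have hT' : T ⊆ A' := Finset.mem_powerset.mp hT
      have hiT : i ∉ T := fun h => hiA' (hT' h)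
      rw [sdiff_insert_insert hiA' hT', Finset.prod_insert hiT, indF_insert hiT]
      ring
    rw [Finset.sum_congr rfl hW1, Finset.sum_congr rfl hW2, ← Finset.mul_sum, ← Finset.mul_sum]
    have hkey' : ∀ j ∈ A', p j ≤ ((1 - ∑ l ∈ A', p l) + p j) * q j := by
      intro j hj
      have h1 := hkey j (Finset.mem_insert_of_mem hj)
      have h2 : ((1 - ∑ l ∈ insert i A', p l) + p j) * q j
          ≤ ((1 - ∑ l ∈ A', p l) + p j) * q j := by
        apply mul_le_mul_of_nonneg_right _ (hq0 j)
        have := hp i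
        linarith [hsum]
      linarith
    have hs0A' : 0 ≤ 1 - ∑ j ∈ A', p j := by
      have := hp i
      linarith [hsum]
    have IH1 := IH G hGm hG0 hs0A' hkey'
    have IH2 := IH (fun v => G (v + ej i))
      (fun v w h => hGm (fun a => add_le_add_left (h a) _))
      (fun v => hG0 _) hs0A' hkey'
    simp only [zero_add] at IH2
    have hq0i := hq0 i
    have hq1i : 0 ≤ 1 - q i := by have := hq1 i; linarith
    have comb : (1 - q i) * ((∑ j ∈ A', p j * G (ej j)) + (1 - ∑ j ∈ A', p j) * G 0)
        + q i * ((∑ j ∈ A', p j * G (ej j + ej i)) + (1 - ∑ j ∈ A', p j) * G (ej i))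
        ≤ (1 - q i) * (∑ T ∈ A'.powerset, ((∏ j ∈ T, q j) * ∏ j ∈ A' \ T, (1 - q j)) * G (indF T))
        + q i * (∑ T ∈ A'.powerset, ((∏ j ∈ T, q j) * ∏ j ∈ A' \ T, (1 - q j)) * G (indF T + ej i)) :=
      add_le_add (mul_le_mul_of_nonneg_left IH1 hq1i) (mul_le_mul_of_nonneg_left IH2 hq0i)
    refine le_trans ?_ comb
    have hup : ∀ j, G (ej j) ≤ G (ej j + ej i) :=
      fun j => hpos _ _ (fun a => Nat.le_add_right _ _)
    have hsum_up : ∑ j ∈ A', p j * G (ej j) ≤ ∑ j ∈ A', p j * G (ej j + ej i) :=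
      Finset.sum_le_sum fun j _ => mul_le_mul_of_nonneg_left (hup j) (hp j)
    have hGei : G 0 ≤ G (ej i) := hpos _ _ (fun a => Nat.zero_le _)
    have hkeyi := hkey i (Finset.mem_insert_self i A')
    rw [show ((1 - ∑ l ∈ insert i A', p l) + p i) = 1 - ∑ l ∈ A', p l from by
      linarith [hsum]] at hkeyi
    rw [Finset.sum_insert hiA']
    have expand : (∑ j ∈ A', p j * G (ej j))
          + (1 - ∑ j ∈ A', p j) * ((1 - q i) * G 0 + q i * G (ej i))
        ≤ (1 - q i) * ((∑ j ∈ A', p j * G (ej j)) + (1 - ∑ j ∈ A', p j) * G 0)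
        + q i * ((∑ j ∈ A', p j * G (ej j + ej i)) + (1 - ∑ j ∈ A', p j) * G (ej i)) := by
      nlinarith [mul_nonneg hq0i (sub_nonneg.mpr hsum_up)]
    refine le_trans ?_ expand
    have habs : p i * G (ej i) + (1 - ∑ l ∈ insert i A', p l) * G 0
        ≤ (1 - ∑ j ∈ A', p j) * ((1 - q i) * G 0 + q i * G (ej i)) := by
      have key : 0 ≤ ((1 - ∑ j ∈ A', p j) * q i - p i) * (G (ej i) - G 0) :=
        mul_nonneg (by linarith [hkeyi]) (by linarith [hGei])
      nlinarith [key, hsum, hG0 (0 : Fin K → ℕ), hs0A']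
    linarith [habs]
end MTB

namespace MTB

lemma marg (q : Fin K → ℝ) (G : (Fin K → ℕ) → ℝ) :
    ∀ (B A : Finset (Fin K)), Disjoint A B →
    (∀ i ∈ B, ∀ v : Fin K → ℕ, G (v + ej i) = G v) →
    ∑ T ∈ (A ∪ B).powerset, ((∏ i ∈ T, q i) * ∏ i ∈ (A ∪ B) \ T, (1 - q i)) * G (indF T)
      = ∑ T ∈ A.powerset, ((∏ i ∈ T, q i) * ∏ i ∈ A \ T, (1 - q i)) * G (indF T) := by
  classical
  intro B
  induction B using Finset.induction_on with
  | empty => intro A _ _; simp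
  | @insert i B' hiB' IH =>
    intro A hdisj hdep
    have hiA : i ∉ A := fun h => (Finset.disjoint_left.mp hdisj h) (Finset.mem_insert_self i B')
    have hdisj' : Disjoint A B' := by
      refine Finset.disjoint_left.mpr fun a ha hb => ?_
      exact (Finset.disjoint_left.mp hdisj ha) (Finset.mem_insert_of_mem hb)
    have hAB : A ∪ insert i B' = insert i (A ∪ B') := by
      ext x; simp only [Finset.mem_union, Finset.mem_insert]; tauto
    have hiAB : i ∉ A ∪ B' := by
      simp only [Finset.mem_union]
      rintro (h | h); exacts [hiA h, hiB' h]
    rw [hAB, Finset.sum_powerset_insert hiAB]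
    have hW1 : ∀ T ∈ (A ∪ B').powerset,
        ((∏ j ∈ T, q j) * ∏ j ∈ (insert i (A ∪ B')) \ T, (1 - q j)) * G (indF T)
        = (1 - q i) * (((∏ j ∈ T, q j) * ∏ j ∈ (A ∪ B') \ T, (1 - q j)) * G (indF T)) := by
      intro T hT
      have hT' : T ⊆ A ∪ B' := Finset.mem_powerset.mp hT
      have hiT : i ∉ (A ∪ B') \ T := fun h => hiAB (Finset.mem_sdiff.mp h).1
      rw [sdiff_insert_left hiAB hT', Finset.prod_insert hiT]
      ring
    have hW2 : ∀ T ∈ (A ∪ B').powerset,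
        ((∏ j ∈ insert i T, q j) * ∏ j ∈ (insert i (A ∪ B')) \ (insert i T), (1 - q j)) *
          G (indF (insert i T))
        = q i * (((∏ j ∈ T, q j) * ∏ j ∈ (A ∪ B') \ T, (1 - q j)) * G (indF T)) := by
      intro T hT
      have hT' : T ⊆ A ∪ B' := Finset.mem_powerset.mp hT
      have hiT : i ∉ T := fun h => hiAB (hT' h)
      rw [sdiff_insert_insert hiAB hT', Finset.prod_insert hiT, indF_insert hiT,
        hdep i (Finset.mem_insert_self i B') (indF T)]
      ring
    rw [Finset.sum_congr rfl hW1, Finset.sum_congr rfl hW2, ← Finset.mul_sum, ← Finset.mul_sum]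
    have : (1 - q i) * (∑ T ∈ (A ∪ B').powerset,
          ((∏ j ∈ T, q j) * ∏ j ∈ (A ∪ B') \ T, (1 - q j)) * G (indF T))
        + q i * (∑ T ∈ (A ∪ B').powerset,
          ((∏ j ∈ T, q j) * ∏ j ∈ (A ∪ B') \ T, (1 - q j)) * G (indF T))
        = ∑ T ∈ (A ∪ B').powerset,
          ((∏ j ∈ T, q j) * ∏ j ∈ (A ∪ B') \ T, (1 - q j)) * G (indF T) := by ring
    rw [this, IH A hdisj' (fun j hj v => hdep j (Finset.mem_insert_of_mem hj) v)]

lemma Ebin_mono (n : ℕ) (q : Fin K → ℝ) (hq0 : ∀ i, 0 ≤ q i) (hq1 : ∀ i, q i ≤ 1)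
    {f1 f2 : (Fin K → ℕ) → ℝ} (h : ∀ c, f1 c ≤ f2 c) : Ebin n q f1 ≤ Ebin n q f2 := by
  unfold Ebin
  refine Finset.sum_le_sum fun d _ => mul_le_mul_of_nonneg_left (h d) ?_
  exact Finset.prod_nonneg fun i _ => binw_nonneg (hq0 i) (hq1 i) n (d i)

lemma Ebin_nonneg (n : ℕ) (q : Fin K → ℝ) (hq0 : ∀ i, 0 ≤ q i) (hq1 : ∀ i, q i ≤ 1)
    {f : (Fin K → ℕ) → ℝ} (h : ∀ c, 0 ≤ f c) : 0 ≤ Ebin n q f := by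
  unfold Ebin
  refine Finset.sum_nonneg fun d _ => mul_nonneg ?_ (h d)
  exact Finset.prod_nonneg fun i _ => binw_nonneg (hq0 i) (hq1 i) n (d i)

lemma countTo_zero (x : Fin 0 → Fin K) : countTo x 0 = 0 := by
  funext i
  unfold countTo
  simp

/-- The main comparison inequality on the level of real expectations. -/
lemma main_ineq (p q : Fin K → ℝ) (R : Finset (Fin K))
    (hp : ∀ i, 0 ≤ p i) (hps : ∑ i, p i = 1)
    (hq0 : ∀ i, 0 ≤ q i) (hq1 : ∀ i, q i ≤ 1)
    (hkey : ∀ i ∈ R, p i ≤ ((1 - ∑ j ∈ R, p j) + p i) * q i) :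
    ∀ (n : ℕ) (f : (Fin K → ℕ) → ℝ), Monotone f → (∀ c, 0 ≤ f c) →
    (∀ c c' : Fin K → ℕ, (∀ i ∈ R, c i = c' i) → f c = f c') →
    Emult n p f ≤ Ebin n q f := by
  classical
  have hsplit : ∑ i ∈ Finset.univ \ R, p i = 1 - ∑ i ∈ R, p i := by
    have := Finset.sum_sdiff (Finset.subset_univ R) (f := p)
    linarith [hps, this]
  have hs0 : 0 ≤ 1 - ∑ i ∈ R, p i := by
    rw [← hsplit]
    exact Finset.sum_nonneg fun i _ => hp i
  intro n
  induction n with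
  | zero =>
    intro f hfm hf0 hfR
    have h1 : Emult 0 p f = f 0 := by
      unfold Emult
      have : ∀ x : Fin 0 → Fin K, (∏ t : Fin 0, p (x t)) * f (countTo x 0) = f 0 := by
        intro x
        rw [countTo_zero]
        simp
      rw [Fintype.sum_congr _ _ this]
      simp
    have h2 : Ebin 0 q f = f 0 := by
      unfold Ebin
      have hset : Fintype.piFinset (fun _ : Fin K => Finset.range 1) = {(0 : Fin K → ℕ)} := by
        ext d
        simp [Fintype.mem_piFinset, Nat.lt_one_iff, funext_iff]
      rw [hset, Finset.sum_singleton]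
      simp [binw]
    rw [h1, h2]
  | succ n IH =>
    intro f hfm hf0 hfR
    rw [Emult_succ]
    set G : (Fin K → ℕ) → ℝ := fun v => Ebin n q (fun c => f (c + v)) with hG
    have step1 : ∑ j, p j * Emult n p (fun c => f (c + ej j)) ≤ ∑ j, p j * G (ej j) := by
      refine Finset.sum_le_sum fun j _ => mul_le_mul_of_nonneg_left ?_ (hp j)
      exact IH (fun c => f (c + ej j))
        (fun v w h => hfm (fun a => add_le_add_left (h a) _))
        (fun c => hf0 _)
        (fun c c' h => hfR _ _ (fun i hi => by simp [h i hi]))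
    refine le_trans step1 ?_
    have hGm : Monotone G := by
      intro v w hvw
      exact Ebin_mono n q hq0 hq1 fun c => hfm (fun a => add_le_add_right (hvw a) _)
    have hG0 : ∀ v, 0 ≤ G v := fun v => Ebin_nonneg n q hq0 hq1 fun c => hf0 _
    have hGR : ∀ i ∈ Finset.univ \ R, ∀ v : Fin K → ℕ, G (v + ej i) = G v := by
      intro i hi v
      have hiR : i ∉ R := (Finset.mem_sdiff.mp hi).2
      refine congrArg (Ebin n q) (funext fun c => hfR _ _ fun j hj => ?_)
      have hji : j ≠ i := fun h => hiR (h ▸ hj)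
      simp [ej, hji]
    -- split the sum over univ into R and its complement
    have hsplitsum : ∑ j, p j * G (ej j)
        = (∑ j ∈ R, p j * G (ej j)) + (1 - ∑ j ∈ R, p j) * G 0 := by
      rw [← Finset.sum_sdiff (Finset.subset_univ R)]
      have : ∀ j ∈ Finset.univ \ R, p j * G (ej j) = p j * G 0 := by
        intro j hj
        rw [show G (ej j) = G 0 from by
          have := hGR j hj 0
          simpa using this]
      rw [Finset.sum_congr rfl this, ← Finset.sum_mul, hsplit]
      ring
    rw [hsplitsum]
    have hbl := BL q p hq0 hq1 hp R G hGm hG0 hs0 hkey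
    refine le_trans hbl ?_
    have hmarg := marg q G (Finset.univ \ R) R (Finset.disjoint_sdiff) hGR
    rw [Finset.union_sdiff_of_subset (Finset.subset_univ R)] at hmarg
    rw [← hmarg, Ebin_succ]

end MTB

namespace MTB

open Classical in
lemma multinomialM_apply (n : ℕ) (p : Fin K → ℝ) (hp : ∀ i, 0 ≤ p i) (A : Set (Fin K → ℕ)) :
    multinomialM n K p A
      = ENNReal.ofReal (Emult n p (fun c => if c ∈ A then 1 else 0)) := by
  classical
  have hg : Measurable (fun (x : Fin n → Fin K) (i : Fin K) => countTo x n i) :=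
    Measurable.of_discrete
  have hA : MeasurableSet A := (Set.to_countable A).measurableSet
  rw [multinomialM, Measure.map_apply hg hA, iidMeasure, Measure.finset_sum_apply]
  have hterm : ∀ x : Fin n → Fin K,
      ((∏ t, ENNReal.ofReal (p (x t))) • Measure.dirac x)
        ((fun (x : Fin n → Fin K) (i : Fin K) => countTo x n i) ⁻¹' A)
      = ENNReal.ofReal ((∏ t, p (x t)) * (if countTo x n ∈ A then 1 else 0)) := by
    intro x
    rw [Measure.smul_apply, Measure.dirac_apply' _ (hg hA), smul_eq_mul]
    rw [← ENNReal.ofReal_prod_of_nonneg (fun t _ => hp (x t))]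
    by_cases hx : countTo x n ∈ A
    · have hx' : x ∈ (fun (x : Fin n → Fin K) (i : Fin K) => countTo x n i) ⁻¹' A := hx
      rw [Set.indicator_of_mem hx' 1]
      simp [hx]
    · have hx' : x ∉ (fun (x : Fin n → Fin K) (i : Fin K) => countTo x n i) ⁻¹' A := hx
      rw [Set.indicator_of_notMem hx' 1]
      simp [hx]
  rw [Finset.sum_congr rfl (fun x _ => hterm x)]
  rw [← ENNReal.ofReal_sum_of_nonneg]
  · rfl
  · intro x _
    refine mul_nonneg (Finset.prod_nonneg fun t _ => hp (x t)) ?_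
    split <;> norm_num

lemma Ebin_eq_finSum (n : ℕ) (q : Fin K → ℝ) (f : (Fin K → ℕ) → ℝ) :
    Ebin n q f = ∑ c : Fin K → Fin (n+1),
      (∏ i, binw n (q i) ((c i : ℕ))) * f (fun i => ((c i : ℕ))) := by
  classical
  unfold Ebin
  refine (Finset.sum_bij (fun (c : Fin K → Fin (n+1)) (_ : c ∈ Finset.univ) =>
    fun i => ((c i : ℕ))) ?_ ?_ ?_ ?_).symm
  · intro c _
    rw [Fintype.mem_piFinset]
    intro i
    exact Finset.mem_range.mpr (c i).isLt
  · intro c1 _ c2 _ h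
    funext i
    exact Fin.ext (congrFun h i)
  · intro d hd
    refine ⟨fun i => ⟨d i, Finset.mem_range.mp ((Fintype.mem_piFinset.mp hd) i)⟩,
      Finset.mem_univ _, rfl⟩
  · intro c _
    rfl

open Classical in
lemma binPi_apply (n : ℕ) (q : Fin K → ℝ) (hq0 : ∀ i, 0 ≤ q i) (hq1 : ∀ i, q i ≤ 1)
    (A : Set (Fin K → ℕ)) :
    binPi n K q A = ENNReal.ofReal (Ebin n q (fun c => if c ∈ A then 1 else 0)) := by
  classical
  have hA : MeasurableSet A := (Set.to_countable A).measurableSet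
  rw [binPi, Measure.finset_sum_apply]
  have hterm : ∀ c : Fin K → Fin (n+1),
      ((∏ i, ENNReal.ofReal ((n.choose (c i)) * q i ^ (c i : ℕ) * (1 - q i) ^ (n - (c i : ℕ)))) •
          Measure.dirac (fun i => ((c i : ℕ)))) A
      = ENNReal.ofReal ((∏ i, binw n (q i) ((c i : ℕ))) *
          (if (fun i => ((c i : ℕ))) ∈ A then 1 else 0)) := by
    intro c
    rw [Measure.smul_apply, Measure.dirac_apply' _ hA, smul_eq_mul]
    have hnn : ∀ i : Fin K, (0:ℝ) ≤ (n.choose (c i)) * q i ^ (c i : ℕ) * (1 - q i) ^ (n - (c i : ℕ)) :=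
      fun i => binw_nonneg (hq0 i) (hq1 i) n (c i)
    rw [← ENNReal.ofReal_prod_of_nonneg (fun i _ => hnn i)]
    by_cases hx : (fun i => ((c i : ℕ))) ∈ A
    · rw [Set.indicator_of_mem hx 1]
      simp only [hx, if_true, mul_one, Pi.one_apply]
      rfl
    · rw [Set.indicator_of_notMem hx 1]
      simp [hx]
  rw [Finset.sum_congr rfl (fun c _ => hterm c)]
  rw [← ENNReal.ofReal_sum_of_nonneg]
  · rw [Ebin_eq_finSum]
  · intro c _
    refine mul_nonneg (Finset.prod_nonneg fun i _ =>
      binw_nonneg (hq0 i) (hq1 i) n ((c i : ℕ))) ?_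
    split <;> norm_num

end MTB


open scoped Classical in
/-- stochastic comparison of multinomial exceedance counts with
independent binomials. -/
theorem multinomial_to_binomial (K n : ℕ) (hK : 2 ≤ K) (hn : 1 ≤ n)
    (pstar : Fin K → ℝ) (hp : pstar ∈ simplex K)
    (R : Finset (Fin K)) (hR : (1/3 : ℝ) ≤ ∑ i ∈ Finset.univ \ R, pstar i)
    (b : Fin K → ℝ) (hb : ∀ i, 0 ≤ b i) (z : ℝ) (hz : 0 < z) :
    multinomialM n K pstar
        {c | z ≤ ∑ i ∈ R, (if b i ≤ (c i : ℝ) then (1 : ℝ) else 0)} ≤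
      binPi n K (fun i => min 1 (3 * pstar i))
        {c | z ≤ ∑ i ∈ R, (if b i ≤ (c i : ℝ) then (1 : ℝ) else 0)} := by

  classical
  obtain ⟨hp0, hp1⟩ := hp
  set q : Fin K → ℝ := fun i => min 1 (3 * pstar i) with hqdef
  have hq0 : ∀ i, 0 ≤ q i := fun i => le_min zero_le_one (by have := hp0 i; linarith)
  have hq1 : ∀ i, q i ≤ 1 := fun i => min_le_left _ _
  set A : Set (Fin K → ℕ) :=
    {c | z ≤ ∑ i ∈ R, (if b i ≤ (c i : ℝ) then (1 : ℝ) else 0)} with hAdef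
  rw [MTB.multinomialM_apply n pstar hp0 A, MTB.binPi_apply n q hq0 hq1 A]
  apply ENNReal.ofReal_le_ofReal
  have hsplit : ∑ i ∈ Finset.univ \ R, pstar i = 1 - ∑ i ∈ R, pstar i := by
    have := Finset.sum_sdiff (Finset.subset_univ R) (f := pstar)
    linarith [hp1, this]
  have hs13 : (1/3 : ℝ) ≤ 1 - ∑ i ∈ R, pstar i := by rw [← hsplit]; exact hR
  have hkey : ∀ i ∈ R, pstar i ≤ ((1 - ∑ j ∈ R, pstar j) + pstar i) * q i := by
    intro i _
    have hpi := hp0 i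
    rcases le_total (3 * pstar i) 1 with h | h
    · rw [show q i = 3 * pstar i from min_eq_right h]
      nlinarith
    · rw [show q i = 1 from min_eq_left h]
      linarith
  refine MTB.main_ineq pstar q R hp0 hp1 hq0 hq1 hkey n
    (fun c => if c ∈ A then 1 else 0) ?_ ?_ ?_
  · intro c c' hcc'
    simp only
    by_cases hc : c ∈ A
    · have hsum : (∑ i ∈ R, if b i ≤ (c i : ℝ) then (1:ℝ) else 0)
          ≤ ∑ i ∈ R, if b i ≤ (c' i : ℝ) then (1:ℝ) else 0 := by
        refine Finset.sum_le_sum fun i _ => ?_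
        have hci : (c i : ℝ) ≤ (c' i : ℝ) := Nat.cast_le.mpr (hcc' i)
        split_ifs with h1 h2
        · exact le_refl 1
        · exact absurd (le_trans h1 hci) h2
        · norm_num
        · exact le_refl 0
      have hcz : z ≤ ∑ i ∈ R, if b i ≤ (c i : ℝ) then (1:ℝ) else 0 := hc
      have hc' : c' ∈ A := show z ≤ _ from le_trans hcz hsum
      simp [hc, hc']
    · simp only [hc, if_false]
      split <;> norm_num
  · intro c
    split <;> norm_num
  · intro c c' h
    have hss : ∑ i ∈ R, (if b i ≤ (c i : ℝ) then (1:ℝ) else 0)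
        = ∑ i ∈ R, (if b i ≤ (c' i : ℝ) then (1:ℝ) else 0) :=
      Finset.sum_congr rfl fun i hi => by rw [h i hi]
    have hmem : c ∈ A ↔ c' ∈ A := by
      constructor
      · intro hcz
        exact show z ≤ _ from hss ▸ (show z ≤ _ from hcz)
      · intro hcz
        exact show z ≤ _ from hss ▸ (show z ≤ _ from hcz)
    by_cases hc : c ∈ A
    · simp [hc, hmem.mp hc]
    · have hc' : c' ∉ A := fun h' => hc (hmem.mpr h')
      simp [hc, hc']
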